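/- Every quasienergy E of a Floquet operator F_τ(0,k) generated over one period [0, 2π] by a bounded Hamiltonian satisfies the bound that it can be chosen with |E| ≤ 2πτ · max_{s,k} ‖H(s,k)‖; consequently, if τ max‖H‖ < 1/2 (equivalently the driving field ε > 2 max‖H‖ in units ℏ = e = 1), all quasienergy branches have zero winding number, hence all Chern numbers/transported charges Q vanish. -/

import Mathlib

open scoped Real


lemma chord_eq (φ : ℝ) :
    ‖Complex.exp (φ * Complex.I) - 1‖ = 2 * |Real.sin (φ / 2)| := by
  have h1 : Complex.exp (φ * Complex.I) - 1
      = ((Real.cos φ - 1 : ℝ) : ℂ) + ((Real.sin φ : ℝ) : ℂ) * Complex.I := by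
    rw [Complex.exp_mul_I, ← Complex.ofReal_cos, ← Complex.ofReal_sin]
    push_cast; ring
  rw [h1, Complex.norm_add_mul_I]
  have h2 : (Real.cos φ - 1) ^ 2 + Real.sin φ ^ 2 = (2 * |Real.sin (φ / 2)|) ^ 2 := by
    have hs : Real.sin (φ / 2) ^ 2 = 1 / 2 - Real.cos (2 * (φ / 2)) / 2 := Real.sin_sq_eq_half_sub _
    rw [show 2 * (φ / 2) = φ by ring] at hs
    have hp : Real.sin φ ^ 2 = 1 - Real.cos φ ^ 2 := by
      have := Real.sin_sq_add_cos_sq φ; linarith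
    have : |Real.sin (φ / 2)| ^ 2 = Real.sin (φ / 2) ^ 2 := sq_abs _
    nlinarith [hs, hp]
  rw [h2, Real.sqrt_sq (by positivity)]

lemma angle_step {z w : ℂ} {β ε : ℝ} (hz : ‖z‖ = 1)
    (hw : w = Complex.exp (β * Complex.I))
    (hd : ‖z - w‖ ≤ ε) (hε : ε ≤ 1 / 2) :
    ∃ φ : ℝ, z = Complex.exp ((β + φ) * Complex.I) ∧ |φ| ≤ ε + ε ^ 3 := by
  have hε0 : 0 ≤ ε := le_trans (norm_nonneg _) hd
  set ζ : ℂ := z * Complex.exp (-β * Complex.I) with hζdef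
  have hζabs : ‖ζ‖ = 1 := by
    rw [hζdef, norm_mul, hz, one_mul, show (-β : ℂ) = ((-β : ℝ) : ℂ) by push_cast; ring,
      Complex.norm_exp_ofReal_mul_I]
  set φ : ℝ := ζ.arg with hφdef
  have hζ : ζ = Complex.exp (φ * Complex.I) := by
    conv_lhs => rw [← Complex.norm_mul_exp_arg_mul_I ζ]
    rw [hζabs, Complex.ofReal_one, one_mul]
  have hzφ : z = Complex.exp ((β + φ) * Complex.I) := by
    have : z = Complex.exp (β * Complex.I) * ζ := by
      rw [hζdef, ← mul_assoc, mul_comm (Complex.exp _), mul_assoc, ← Complex.exp_add]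
      norm_num
    rw [this, hζ, ← Complex.exp_add]
    congr 1; push_cast; ring
  refine ⟨φ, hzφ, ?_⟩
  have hchord : 2 * |Real.sin (φ / 2)| ≤ ε := by
    have : z - w = Complex.exp (β * Complex.I) * (Complex.exp (φ * Complex.I) - 1) := by
      rw [hw, hzφ, mul_sub, mul_one, ← Complex.exp_add]; congr 2; push_cast; ring
    rw [this, norm_mul, show (β : ℂ) = ((β : ℝ) : ℂ) from rfl, Complex.norm_exp_ofReal_mul_I,
      one_mul, chord_eq] at hd
    exact hd
  have hφpi : |φ| ≤ π := Complex.abs_arg_le_pi ζ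
  have hsinabs : Real.sin (|φ| / 2) = |Real.sin (φ / 2)| := by
    rcases le_or_gt 0 φ with h | h
    · rw [abs_of_nonneg h, abs_of_nonneg]
      apply Real.sin_nonneg_of_nonneg_of_le_pi (by linarith)
      have := abs_of_nonneg h ▸ hφpi; linarith
    · rw [abs_of_neg h, abs_of_nonpos, neg_div, Real.sin_neg]
      have h2 : 0 ≤ Real.sin (-(φ / 2)) := by
        apply Real.sin_nonneg_of_nonneg_of_le_pi (by linarith)
        have := abs_of_neg h ▸ hφpi; linarith
      rw [Real.sin_neg] at h2; linarith
  have hsin : 2 * Real.sin (|φ| / 2) ≤ ε := by rw [hsinabs]; exact hchord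
  -- Jordan-type a priori bound: |φ| ≤ 2 ε
  have hjordan : |φ| ≤ 2 * ε := by
    have h1 : 2 / π * (|φ| / 2) ≤ Real.sin (|φ| / 2) :=
      Real.mul_le_sin (by positivity) (by linarith)
    have hπ : π ≤ 4 := by linarith [Real.pi_le_four]
    have hπ0 : 0 < π := Real.pi_pos
    have : 2 / π * (|φ| / 2) ≤ ε / 2 := by linarith
    rw [div_mul_eq_mul_div, div_le_div_iff₀ hπ0 two_pos] at this
    nlinarith [abs_nonneg φ]
  rcases eq_or_lt_of_le (abs_nonneg φ) with h0 | h0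
  · rw [← h0]; positivity
  · have hcube : |φ| / 2 - (|φ| / 2) ^ 3 / 4 < Real.sin (|φ| / 2) :=
      lt_of_le_of_lt (by have : 0 ≤ (|φ| / 2) ^ 3 := by positivity
                         linarith) (Real.sin_gt_sub_cube (by linarith))
    have h16 : |φ| - |φ| ^ 3 / 16 ≤ ε := by nlinarith
    have hsq : |φ| ^ 2 ≤ 4 * ε ^ 2 := by nlinarith [sq_nonneg (|φ| - 2 * ε)]
    have ha2 : |φ| ^ 3 ≤ 4 * ε ^ 2 * |φ| := by
      have := mul_le_mul_of_nonneg_right hsq h0.le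
      nlinarith
    have hkey : |φ| * (1 - ε ^ 2 / 4) ≤ ε := by nlinarith
    have hpos : (0:ℝ) < 1 - ε ^ 2 / 4 := by nlinarith
    by_contra hcon
    push_neg at hcon
    have := mul_lt_mul_of_pos_right hcon hpos
    nlinarith

section SpecPerturb
variable {𝓗 : Type*} [NormedAddCommGroup 𝓗] [InnerProductSpace ℂ 𝓗] [CompleteSpace 𝓗]
  [Nontrivial 𝓗]

lemma isStarNormal_of_unitary {B : 𝓗 →L[ℂ] 𝓗} (hB : B ∈ unitary (𝓗 →L[ℂ] 𝓗)) :
    IsStarNormal B := by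
  constructor
  rw [Commute, SemiconjBy, (Unitary.mem_iff.mp hB).1, (Unitary.mem_iff.mp hB).2]

lemma spec_perturb {A B : 𝓗 →L[ℂ] 𝓗} (hB : B ∈ unitary (𝓗 →L[ℂ] 𝓗)) {z : ℂ}
    (hz : z ∈ spectrum ℂ A) :
    ∃ w ∈ spectrum ℂ B, ‖z - w‖ ≤ ‖A - B‖ := by
  haveI := isStarNormal_of_unitary hB
  have hcpt : IsCompact (spectrum ℂ B) := spectrum.isCompact B
  have hne : (spectrum ℂ B).Nonempty := spectrum.nonempty B
  obtain ⟨w, hw, hwd⟩ := hcpt.exists_infDist_eq_dist hne z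
  refine ⟨w, hw, ?_⟩
  by_contra hcon
  push_neg at hcon
  rw [Complex.dist_eq] at hwd
  set δ : ℝ := dist z w with hδdef
  have hδpos : 0 < δ := lt_of_le_of_lt (norm_nonneg (A - B))
    (by rw [hδdef, Complex.dist_eq]; exact hcon)
  have hδle : ∀ x ∈ spectrum ℂ B, δ ≤ dist z x := fun x hx => by
    rw [hδdef, Complex.dist_eq, ← hwd]; exact Metric.infDist_le_dist_of_mem hx
  -- the resolvent of B at z via cfc
  set f : ℂ → ℂ := fun x => (x - z)⁻¹ with hfdef
  have hfc : ContinuousOn f (spectrum ℂ B) := by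
    apply ContinuousOn.inv₀ (by fun_prop)
    intro x hx
    have := hδle x hx
    rw [dist_comm, Complex.dist_eq] at this
    intro h
    rw [sub_eq_zero] at h
    rw [h, sub_self] at this
    simpa using lt_of_lt_of_le hδpos this
  have hsub : cfc (fun x : ℂ => x - z) B = B - algebraMap ℂ (𝓗 →L[ℂ] 𝓗) z := by
    rw [cfc_sub (fun x : ℂ => x) (fun _ : ℂ => z) B, cfc_id' ℂ B, cfc_const z B]
  have hmul : cfc f B * (B - algebraMap ℂ (𝓗 →L[ℂ] 𝓗) z) = 1 := by
    rw [← hsub, ← cfc_mul f (fun x => x - z) B hfc (by fun_prop)]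
    rw [show (fun x => f x * (x - z)) = fun x : ℂ => (x - z)⁻¹ * (x - z) from rfl]
    rw [cfc_congr (g := fun _ : ℂ => 1) ?_, cfc_const_one ℂ B]
    intro x hx
    refine inv_mul_cancel₀ fun h => ?_
    have := hδle x hx
    rw [dist_comm, Complex.dist_eq, sub_eq_zero.mp h, sub_self] at this
    simpa using lt_of_lt_of_le hδpos this
  have hmul' : (B - algebraMap ℂ (𝓗 →L[ℂ] 𝓗) z) * cfc f B = 1 := by
    rw [← hsub, ← cfc_mul (fun x => x - z) f B (by fun_prop) hfc]
    rw [show (fun x => (x - z) * f x) = fun x : ℂ => (x - z) * (x - z)⁻¹ from rfl]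
    rw [cfc_congr (g := fun _ : ℂ => 1) ?_, cfc_const_one ℂ B]
    intro x hx
    refine mul_inv_cancel₀ fun h => ?_
    have := hδle x hx
    rw [dist_comm, Complex.dist_eq, sub_eq_zero.mp h, sub_self] at this
    simpa using lt_of_lt_of_le hδpos this
  have hnorm : ‖cfc f B‖ ≤ δ⁻¹ := by
    apply norm_cfc_le (by positivity)
    intro x hx
    have h1 : δ ≤ ‖x - z‖ := by
      have := hδle x hx; rwa [dist_comm, Complex.dist_eq] at this
    rw [hfdef]
    simp only [norm_inv]
    exact inv_anti₀ hδpos h1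
  -- now build the inverse of A - z
  have hsmall : ‖cfc f B * (B - A)‖ < 1 := by
    calc ‖cfc f B * (B - A)‖ ≤ ‖cfc f B‖ * ‖B - A‖ := norm_mul_le _ _
    _ ≤ δ⁻¹ * ‖B - A‖ := by
        apply mul_le_mul_of_nonneg_right hnorm (norm_nonneg _)
    _ < 1 := by
        rw [norm_sub_rev, inv_mul_lt_iff₀ hδpos, mul_one, hδdef, Complex.dist_eq]
        exact hcon
  have hunit1 : IsUnit ((1 : 𝓗 →L[ℂ] 𝓗) - cfc f B * (B - A)) :=
    isUnit_one_sub_of_norm_lt_one hsmall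
  have hunitB : IsUnit (B - algebraMap ℂ (𝓗 →L[ℂ] 𝓗) z) :=
    ⟨⟨B - algebraMap ℂ (𝓗 →L[ℂ] 𝓗) z, cfc f B, hmul', hmul⟩, rfl⟩
  have hfact : A - algebraMap ℂ (𝓗 →L[ℂ] 𝓗) z
      = (B - algebraMap ℂ (𝓗 →L[ℂ] 𝓗) z) * ((1 : 𝓗 →L[ℂ] 𝓗) - cfc f B * (B - A)) := by
    rw [mul_sub, mul_one, ← mul_assoc, hmul', one_mul]
    abel
  have hunitA : IsUnit (algebraMap ℂ (𝓗 →L[ℂ] 𝓗) z - A) := by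
    have : algebraMap ℂ (𝓗 →L[ℂ] 𝓗) z - A = -(A - algebraMap ℂ (𝓗 →L[ℂ] 𝓗) z) := by abel
    rw [this, hfact]
    exact (hunitB.mul hunit1).neg
  exact spectrum.notMem_iff.mpr hunitA hz

end SpecPerturb


theorem quasienergy_bound_and_zero_winding
    {𝓗 : Type*} [NormedAddCommGroup 𝓗] [InnerProductSpace ℂ 𝓗] [CompleteSpace 𝓗]
    (τ C : ℝ) (hτ : 0 < τ) (hC : 0 ≤ C)
    (H : ℝ → ℝ → (𝓗 →L[ℂ] 𝓗))
    (hHcont : Continuous fun q : ℝ × ℝ => H q.1 q.2)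
    (hHsa : ∀ k s, IsSelfAdjoint (H k s))
    (hHbdd : ∀ k s, ‖H k s‖ ≤ C)
    (hHper : ∀ k s, H k (s + 2 * π) = H k s)
    (U : ℝ → ℝ → (𝓗 →L[ℂ] 𝓗))
    (hU0 : ∀ k, U k 0 = 1)
    (hUode : ∀ k s,
      HasDerivAt (fun s' => U k s') ((-Complex.I * (τ : ℂ)) • ((H k s).comp (U k s))) s)
    (hUunit : ∀ k s, U k s ∈ unitary (𝓗 →L[ℂ] 𝓗)) :
    (∀ k : ℝ, ∀ μ ∈ spectrum ℂ (U k (2 * π)),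
      ∃ E : ℝ, μ = Complex.exp (Complex.I * E) ∧ |E| ≤ 2 * π * τ * C) ∧
    (τ * C < 1 / 2 →
      ∀ E : ℝ → ℝ, Continuous E →
        (∀ k : ℝ, Complex.exp (Complex.I * E k) ∈ spectrum ℂ (U k (2 * π))) →
        (∃ m : ℤ, E (2 * π) - E 0 = 2 * π * m) →
        E (2 * π) = E 0) := by
  have hπ : (0:ℝ) < π := Real.pi_pos
  rcases subsingleton_or_nontrivial 𝓗 with hsub | hnt
  · -- trivial Hilbert space : spectra are empty
    have hempty : ∀ (T : 𝓗 →L[ℂ] 𝓗) (z : ℂ), z ∉ spectrum ℂ T := by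
      intro T z
      exact spectrum.notMem_iff.mpr (isUnit_of_subsingleton _)
    refine ⟨fun k μ hμ => absurd hμ (hempty _ _), fun _ E _ hmem _ => absurd (hmem 0) (hempty _ _)⟩
  · -- the interesting case
    have hnormU : ∀ k s, ‖U k s‖ = 1 := fun k s => CStarRing.norm_of_mem_unitary (hUunit k s)
    -- Lipschitz bound on the propagator
    have hLip : ∀ (k : ℝ) (s t : ℝ), s ≤ t → ‖U k t - U k s‖ ≤ τ * C * (t - s) := by
      intro k s t hst
      have := norm_image_sub_le_of_norm_deriv_le_segment'
        (f := fun s' => U k s')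
        (f' := fun x => (-Complex.I * (τ : ℂ)) • ((H k x).comp (U k x)))
        (a := s) (b := t)
        (fun x _ => (hUode k x).hasDerivWithinAt)
        (C := τ * C) ?_ t (Set.right_mem_Icc.mpr hst)
      · linarith [this]
      · intro x _
        have h1 : ‖(-Complex.I * (τ : ℂ)) • ((H k x).comp (U k x))‖
            = ‖(-Complex.I * (τ : ℂ))‖ * ‖(H k x).comp (U k x)‖ := norm_smul _ _
        have h2 : ‖(-Complex.I * (τ : ℂ))‖ = τ := by
          rw [norm_mul, norm_neg, Complex.norm_I, one_mul, Complex.norm_real,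
            Real.norm_eq_abs, abs_of_pos hτ]
        have h3 : ‖(H k x).comp (U k x)‖ ≤ C := by
          calc ‖(H k x).comp (U k x)‖ ≤ ‖H k x‖ * ‖U k x‖ := ContinuousLinearMap.opNorm_comp_le _ _
          _ ≤ C * 1 := by
              apply mul_le_mul (hHbdd k x) (le_of_eq (hnormU k x)) (norm_nonneg _) hC
          _ = C := mul_one C
        rw [h1, h2]
        exact mul_le_mul_of_nonneg_left h3 hτ.le
    -- spectra lie on the unit circle
    have habs1 : ∀ (k s : ℝ) (z : ℂ), z ∈ spectrum ℂ (U k s) → ‖z‖ = 1 := by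
      intro k s z hz
      have := spectrum.subset_circle_of_unitary (hUunit k s) hz
      rwa [Metric.mem_sphere, Complex.dist_eq, sub_zero] at this
    -- arc confinement along a partition
    have harc : ∀ (k : ℝ) (n : ℕ), 0 < n → 2 * π * τ * C / n ≤ 1 / 2 →
        ∀ j : ℕ, j ≤ n → ∀ z ∈ spectrum ℂ (U k ((j : ℝ) * (2 * π / n))),
          ∃ α : ℝ, z = Complex.exp (α * Complex.I) ∧
            |α| ≤ (j : ℝ) * (2 * π * τ * C / n + (2 * π * τ * C / n) ^ 3) := by
      intro k n hn hε j
      induction j with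
      | zero =>
        intro _ z hz
        rw [show ((0:ℕ) : ℝ) * (2 * π / n) = 0 by push_cast; ring, hU0 k,
          spectrum.one_eq] at hz
        refine ⟨0, by rw [Set.mem_singleton_iff.mp hz]; simp, by simp⟩
      | succ j ih =>
        intro hj z hz
        obtain ⟨w, hw, hwz⟩ := spec_perturb (hUunit k ((j : ℝ) * (2 * π / n))) hz
        obtain ⟨β, hβ, hβle⟩ := ih (le_of_lt (Nat.lt_of_succ_le hj)) w hw
        have hdist : ‖z - w‖ ≤ 2 * π * τ * C / n := by
          refine le_trans hwz (le_trans (hLip k _ _ ?_) (le_of_eq ?_))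
          · have : (0:ℝ) ≤ 2 * π / n := by positivity
            push_cast
            nlinarith
          · have hn' : (n:ℝ) ≠ 0 := Nat.cast_ne_zero.mpr hn.ne'
            push_cast
            field_simp
            ring
        obtain ⟨φ, hφ, hφle⟩ := angle_step (habs1 k _ z hz) hβ hdist hε
        refine ⟨β + φ, by rw [hφ]; norm_cast, ?_⟩
        calc |β + φ| ≤ |β| + |φ| := abs_add_le _ _
        _ ≤ (j : ℝ) * (2 * π * τ * C / n + (2 * π * τ * C / n) ^ 3)
            + (2 * π * τ * C / n + (2 * π * τ * C / n) ^ 3) := add_le_add hβle hφle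
        _ = ((j + 1 : ℕ) : ℝ) * (2 * π * τ * C / n + (2 * π * τ * C / n) ^ 3) := by
            push_cast; ring
    -- Part 1
    have P1 : ∀ k : ℝ, ∀ μ ∈ spectrum ℂ (U k (2 * π)),
        ∃ E : ℝ, μ = Complex.exp (Complex.I * E) ∧ |E| ≤ 2 * π * τ * C := by
      intro k μ hμ
      have habsμ : ‖μ‖ = 1 := habs1 k _ μ hμ
      have hμarg : μ = Complex.exp (Complex.I * μ.arg) := by
        conv_lhs => rw [← Complex.norm_mul_exp_arg_mul_I μ]
        rw [habsμ, Complex.ofReal_one, one_mul, mul_comm]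
      set a : ℝ := 2 * π * τ * C with hadef
      have ha0 : 0 ≤ a := by positivity
      rcases le_or_gt π a with hc | hc
      · exact ⟨μ.arg, hμarg, le_trans (Complex.abs_arg_le_pi μ) hc⟩
      · refine ⟨μ.arg, hμarg, ?_⟩
        -- show |arg μ| ≤ a + η for every η > 0
        refine le_of_forall_pos_le_add ?_
        intro η hη
        set δ : ℝ := min η (π - a) with hδdef
        have hδ0 : 0 < δ := lt_min hη (by linarith)
        obtain ⟨n, hngt⟩ := exists_nat_gt (max (4 * π + 1) (a ^ 3 / δ))
        have hn1 : (1:ℝ) ≤ n := by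
          have := le_max_left (4 * π + 1) (a ^ 3 / δ)
          linarith [hngt, hπ]
        have hnpos : 0 < n := by exact_mod_cast lt_of_lt_of_le zero_lt_one hn1
        have hn4π : 4 * π + 1 < n := lt_of_le_of_lt (le_max_left _ _) hngt
        have hna : a ^ 3 / δ < n := lt_of_le_of_lt (le_max_right _ _) hngt
        have hne : a / n ≤ 1 / 2 := by
          rw [div_le_div_iff₀ (by positivity) two_pos]
          nlinarith
        have hcube : a ^ 3 / (n:ℝ) ^ 2 < δ := by
          have h1 : a ^ 3 / (n:ℝ) ^ 2 ≤ a ^ 3 / n := by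
            apply div_le_div_of_nonneg_left (by positivity) (by positivity)
            nlinarith
          have h2 : a ^ 3 / n < δ := by
            rw [div_lt_iff₀ (by positivity)]
            calc a ^ 3 = (a ^ 3 / δ) * δ := by field_simp
            _ < n * δ := by exact mul_lt_mul_of_pos_right hna hδ0
            _ = δ * n := mul_comm _ _
          linarith
        have h2π : (n : ℝ) * (2 * π / n) = 2 * π := by
          field_simp
        have hμ' : μ ∈ spectrum ℂ (U k ((n:ℝ) * (2 * π / n))) := by rwa [h2π]
        obtain ⟨α, hα, hαle⟩ := harc k n hnpos hne n le_rfl μ hμ'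
        have heq : (n : ℝ) * (a / n + (a / n) ^ 3) = a + a ^ 3 / (n:ℝ) ^ 2 := by
          have hn' : (n:ℝ) ≠ 0 := by positivity
          field_simp
        rw [heq] at hαle
        have hαπ : |α| < π := by
          have hδπ : δ ≤ π - a := min_le_right η (π - a)
          linarith [hcube, hαle]
        have hargeq : μ.arg = α := by
          rw [hα, Complex.exp_mul_I]
          exact Complex.arg_cos_add_sin_mul_I
            ⟨by linarith [(abs_lt.mp hαπ).1], by linarith [(abs_lt.mp hαπ).2]⟩
        rw [hargeq]
        have hδη : δ ≤ η := min_le_left _ _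
        linarith [hαle, hcube]
    refine ⟨P1, ?_⟩
    -- Part 2
    intro hsmall E hEcont hmem hwind
    set a : ℝ := 2 * π * τ * C with hadef
    have ha0 : 0 ≤ a := by positivity
    have haπ : a < π := by
      rw [hadef]
      nlinarith
    -- every value of E lies in a band around a multiple of 2π
    have hband : ∀ k : ℝ, ∃ m : ℤ, |E k - 2 * π * m| ≤ a := by
      intro k
      obtain ⟨E', hE'eq, hE'le⟩ := P1 k _ (hmem k)
      rw [Complex.exp_eq_exp_iff_exists_int] at hE'eq
      obtain ⟨m, hm⟩ := hE'eq
      refine ⟨m, ?_⟩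
      have him : E k = E' + m * (2 * π) := by
        have := congrArg Complex.im hm
        simpa [Complex.mul_im, Complex.mul_re] using this
      rw [him]
      have : E' + m * (2 * π) - 2 * π * m = E' := by ring
      rw [this]
      exact hE'le
    obtain ⟨m, hm⟩ := hwind
    -- the gap values 2πj + π are never attained
    have hgap : ∀ (j : ℤ) (k : ℝ), E k ≠ 2 * π * j + π := by
      intro j k hEk
      obtain ⟨m', hm'⟩ := hband k
      rw [hEk] at hm'
      have : 2 * π * j + π - 2 * π * m' = 2 * π * (j - m') + π := by push_cast; ring
      rw [this] at hm'
      rcases le_or_gt 0 (j - m' : ℤ) with hj | hj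
      · have hjr : (0:ℝ) ≤ (j:ℝ) - (m':ℝ) := by
          have : ((j - m' : ℤ) : ℝ) = (j:ℝ) - (m':ℝ) := by push_cast; ring
          rw [← this]; exact_mod_cast hj
        have hππ : π ≤ |2 * π * ((j:ℝ) - (m':ℝ)) + π| := by
          rw [abs_of_nonneg (by nlinarith)]
          nlinarith
        linarith [hm', hππ]
      · have hj' : (j - m' : ℤ) ≤ -1 := by omega
        have hjr : (j:ℝ) - (m':ℝ) ≤ -1 := by
          have : ((j - m' : ℤ) : ℝ) = (j:ℝ) - (m':ℝ) := by push_cast; ring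
          rw [← this]; exact_mod_cast hj'
        have hππ : π ≤ |2 * π * ((j:ℝ) - (m':ℝ)) + π| := by
          rw [abs_of_nonpos (by nlinarith)]
          nlinarith
        linarith [hm', hππ]
    -- conclude m = 0 via the intermediate value theorem
    have hm0 : m = 0 := by
      by_contra hm0
      obtain ⟨n₀, hn₀⟩ := hband 0
      have hn₀' := abs_le.mp hn₀
      rcases lt_or_gt_of_ne hm0 with hneg | hpos
      · -- m ≤ -1 : E decreases by at least 2π, crosses 2π(n₀-1)+π
        have hm1 : (m:ℝ) ≤ -1 := by
          have : m ≤ -1 := by omega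
          exact_mod_cast this
        have h2πm : 2 * π * (m:ℝ) ≤ 2 * π * (-1 : ℝ) :=
          mul_le_mul_of_nonneg_left hm1 (by positivity)
        set v : ℝ := 2 * π * n₀ - π with hvdef
        have hv1 : v < E 0 := by
          rw [hvdef]; linarith [hn₀'.1]
        have hv2 : E (2 * π) < v := by
          have hE2 : E (2 * π) = E 0 + 2 * π * m := by linarith [hm]
          rw [hE2, hvdef]
          linarith [hn₀'.2, h2πm]
        have hIVT := intermediate_value_Icc' (by linarith : (0:ℝ) ≤ 2 * π)
          hEcont.continuousOn
        have hvmem : v ∈ Set.Icc (E (2 * π)) (E 0) := ⟨hv2.le, hv1.le⟩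
        obtain ⟨k, _, hk⟩ := hIVT hvmem
        refine hgap (n₀ - 1) k ?_
        rw [hk, hvdef]
        push_cast
        ring
      · have hm1 : (1:ℝ) ≤ (m:ℝ) := by exact_mod_cast hpos
        have h2πm : 2 * π * (1:ℝ) ≤ 2 * π * (m:ℝ) :=
          mul_le_mul_of_nonneg_left hm1 (by positivity)
        set v : ℝ := 2 * π * n₀ + π with hvdef
        have hv1 : E 0 < v := by
          rw [hvdef]; linarith [hn₀'.2]
        have hv2 : v < E (2 * π) := by
          have hE2 : E (2 * π) = E 0 + 2 * π * m := by linarith [hm]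
          rw [hE2, hvdef]
          linarith [hn₀'.1, h2πm]
        have hIVT := intermediate_value_Icc (by linarith : (0:ℝ) ≤ 2 * π)
          hEcont.continuousOn
        have hvmem : v ∈ Set.Icc (E 0) (E (2 * π)) := ⟨hv1.le, hv2.le⟩
        obtain ⟨k, _, hk⟩ := hIVT hvmem
        exact hgap n₀ k (by rw [hk])
    rw [hm0] at hm
    push_cast at hm
    linarith
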